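/- For positive definite Hermitian matrices Φ₀ and Φ₁, the geodesic midpoint Φ_{1/2} := ((Φ₀^{1/2} + Φ₁^{1/2}U)/2)((Φ₀^{1/2} + Φ₁^{1/2}U)/2)* with U := Φ₁^{-1/2} Φ₀^{-1/2} (Φ₀^{1/2} Φ₁ Φ₀^{1/2})^{1/2} satisfies d(Φ₀, Φ_{1/2}) = d(Φ_{1/2}, Φ₁) = d(Φ₀,Φ₁)/2, where d(A,B)² := tr(A)+tr(B)-2·tr((B^{1/2}AB^{1/2})^{1/2}). -/

import Mathlib

open Matrix
open scoped ComplexOrder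

/-- `Matrix.PosSemidef.sqrt` was removed from Mathlib; restored here with its old definition. -/
noncomputable def Matrix.PosSemidef.sqrt {n 𝕜 : Type*} [Fintype n] [RCLike 𝕜] [DecidableEq n]
    {A : Matrix n n 𝕜} (hA : A.PosSemidef) : Matrix n n 𝕜 :=
  hA.1.eigenvectorUnitary.1 * diagonal ((↑) ∘ (hA.1.eigenvalues · |>.sqrt)) *
  (star hA.1.eigenvectorUnitary : Matrix n n 𝕜)

open scoped MatrixOrder in
private lemma Matrix.PosSemidef.sqrt_eq_cfcSqrt {n 𝕜 : Type*} [Fintype n] [RCLike 𝕜]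
    [DecidableEq n] {A : Matrix n n 𝕜} (hA : A.PosSemidef) : hA.sqrt = CFC.sqrt A := by
  rw [CFC.sqrt_eq_cfc, cfc_nnreal_eq_real _ A, hA.1.cfc_eq]
  simp only [IsHermitian.cfc, Matrix.PosSemidef.sqrt, Unitary.conjStarAlgAut_apply]
  congr 3
  funext i
  simp [Real.coe_sqrt, Real.coe_toNNReal', hA.eigenvalues_nonneg i]

open scoped MatrixOrder in
lemma Matrix.PosSemidef.posSemidef_sqrt {n 𝕜 : Type*} [Fintype n] [RCLike 𝕜]
    [DecidableEq n] {A : Matrix n n 𝕜} (hA : A.PosSemidef) : hA.sqrt.PosSemidef := by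
  rw [hA.sqrt_eq_cfcSqrt]; exact (CFC.sqrt_nonneg A).posSemidef

open scoped MatrixOrder in
lemma Matrix.PosSemidef.sqrt_mul_self {n 𝕜 : Type*} [Fintype n] [RCLike 𝕜]
    [DecidableEq n] {A : Matrix n n 𝕜} (hA : A.PosSemidef) : hA.sqrt * hA.sqrt = A := by
  rw [hA.sqrt_eq_cfcSqrt]; exact CFC.sqrt_mul_sqrt_self A hA.nonneg

lemma Matrix.PosSemidef.sq_sqrt {n 𝕜 : Type*} [Fintype n] [RCLike 𝕜]
    [DecidableEq n] {A : Matrix n n 𝕜} (hA : A.PosSemidef) : hA.sqrt ^ 2 = A := by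
  rw [pow_two]; exact hA.sqrt_mul_self

open scoped MatrixOrder in
lemma Matrix.PosSemidef.eq_sqrt_of_sq_eq {n 𝕜 : Type*} [Fintype n] [RCLike 𝕜]
    [DecidableEq n] {A B : Matrix n n 𝕜} (hB : B.PosSemidef) (hA : A.PosSemidef)
    (h : B ^ 2 = A) : B = hA.sqrt := by
  rw [hA.sqrt_eq_cfcSqrt, eq_comm, CFC.sqrt_eq_iff A B hA.nonneg hB.nonneg, ← pow_two, h]

private lemma half_smul_psd {n : ℕ} {X : Matrix (Fin n) (Fin n) ℂ} (hX : X.PosSemidef) :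
    (((1:ℂ)/2) • X).PosSemidef := by
  refine ⟨?_, fun x => ?_⟩
  · simp [Matrix.IsHermitian, conjTranspose_smul, hX.1.eq]
  · exact (hX.smul (a := ((1:ℂ)/2)) (by norm_num [Complex.le_def])).2 x

private lemma inv_psd {n : ℕ} {X : Matrix (Fin n) (Fin n) ℂ} (hX : X.PosSemidef)
    (hd : X.det ≠ 0) : (X⁻¹).PosSemidef := by
  have h1 : X⁻¹ * X * (X⁻¹)ᴴ = X⁻¹ := by
    rw [conjTranspose_nonsing_inv, hX.1.eq, Matrix.mul_assoc,
      Matrix.mul_nonsing_inv _ (isUnit_iff_ne_zero.mpr hd), Matrix.mul_one]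
  simpa [h1] using hX.mul_mul_conjTranspose_same X⁻¹

private lemma trace_sqrt_comm {n : ℕ} {C : Matrix (Fin n) (Fin n) ℂ} (hC : C.det ≠ 0)
    (hL : (C * Cᴴ).PosSemidef) (hR : (Cᴴ * C).PosSemidef) :
    hR.sqrt.trace = hL.sqrt.trace := by
  set Q := hL.sqrt with hQ
  have hQpsd : Q.PosSemidef := hL.posSemidef_sqrt
  have hQQ : Q * Q = C * Cᴴ := hL.sqrt_mul_self
  have hCd : Cᴴ.det ≠ 0 := by
    rw [det_conjTranspose]; exact star_ne_zero.mpr hC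
  have hQd : Q.det ≠ 0 := by
    intro h
    have h2 : (C * Cᴴ).det ≠ 0 := by rw [det_mul]; exact mul_ne_zero hC hCd
    rw [← hQQ, det_mul, h, mul_zero] at h2
    exact h2 rfl
  have hQu : IsUnit Q.det := isUnit_iff_ne_zero.mpr hQd
  have hQi : Q * Q⁻¹ = 1 := mul_nonsing_inv _ hQu
  have hQi' : Q⁻¹ * Q = 1 := nonsing_inv_mul _ hQu
  set X := Cᴴ * Q⁻¹ * C with hXdef
  have hXpsd : X.PosSemidef := by
    simpa [hXdef] using (inv_psd hQpsd hQd).mul_mul_conjTranspose_same Cᴴ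
  have hX2 : X ^ 2 = Cᴴ * C := by
    rw [pow_two, hXdef]
    calc Cᴴ * Q⁻¹ * C * (Cᴴ * Q⁻¹ * C)
        = Cᴴ * Q⁻¹ * (C * Cᴴ) * Q⁻¹ * C := by
          simp only [Matrix.mul_assoc]
      _ = Cᴴ * Q⁻¹ * (Q * Q) * Q⁻¹ * C := by rw [hQQ]
      _ = Cᴴ * ((Q⁻¹ * Q) * (Q * Q⁻¹)) * C := by simp only [Matrix.mul_assoc]
      _ = Cᴴ * C := by rw [hQi, hQi', Matrix.one_mul, Matrix.mul_one]
  have hXs : X = hR.sqrt := hXpsd.eq_sqrt_of_sq_eq hR hX2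
  rw [← hXs, hXdef, Matrix.trace_mul_cycle, ← hQQ, Matrix.mul_assoc, hQi, Matrix.mul_one]

set_option maxHeartbeats 1000000 in
private lemma hellinger_aux (n : ℕ)
    (Φ₀ Φ₁ M A B S R : Matrix (Fin n) (Fin n) ℂ)
    (h0 : Φ₀.PosDef) (h1 : Φ₁.PosDef) (hM : M.PosDef)
    (hAH : Aᴴ = A) (hBH : Bᴴ = B) (hSH : Sᴴ = S) (hRH : Rᴴ = R)
    (hAA : A * A = Φ₀) (hBB : B * B = Φ₁) (hRR : R * R = M)
    (hS0 : (A * Φ₁ * A).PosSemidef) (hSeq : S = hS0.sqrt)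
    (hMdef : M = (((1:ℂ)/2) • (A + A⁻¹ * S)) * (((1:ℂ)/2) • (A + A⁻¹ * S))ᴴ)
    (hS1 : (R * Φ₀ * R).PosSemidef)
    (hS2 : (B * M * B).PosSemidef)
    (hS3 : (B * Φ₀ * B).PosSemidef) :
    Real.sqrt (Φ₀.trace.re + M.trace.re - 2 * hS1.sqrt.trace.re) =
        Real.sqrt (Φ₀.trace.re + Φ₁.trace.re - 2 * hS3.sqrt.trace.re) / 2 ∧
      Real.sqrt (M.trace.re + Φ₁.trace.re - 2 * hS2.sqrt.trace.re) =
        Real.sqrt (Φ₀.trace.re + Φ₁.trace.re - 2 * hS3.sqrt.trace.re) / 2 := by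
  have hSpsd : S.PosSemidef := hSeq ▸ hS0.posSemidef_sqrt
  have hSS : S * S = A * Φ₁ * A := by rw [hSeq]; exact hS0.sqrt_mul_self
  have hdΦ₀ : Φ₀.det ≠ 0 := h0.det_pos.ne'
  have hdΦ₁ : Φ₁.det ≠ 0 := h1.det_pos.ne'
  have hdM : M.det ≠ 0 := hM.det_pos.ne'
  have hdA : A.det ≠ 0 := by
    intro h; apply hdΦ₀; rw [← hAA, det_mul, h, mul_zero]
  have hdB : B.det ≠ 0 := by
    intro h; apply hdΦ₁; rw [← hBB, det_mul, h, mul_zero]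
  have hdR : R.det ≠ 0 := by
    intro h; apply hdM; rw [← hRR, det_mul, h, mul_zero]
  have hAi : A * A⁻¹ = 1 := mul_nonsing_inv _ (isUnit_iff_ne_zero.mpr hdA)
  have hAi' : A⁻¹ * A = 1 := nonsing_inv_mul _ (isUnit_iff_ne_zero.mpr hdA)
  have hcan1 : ∀ X : Matrix (Fin n) (Fin n) ℂ, A⁻¹ * (A * X) = X := fun X => by
    rw [← Matrix.mul_assoc, hAi', Matrix.one_mul]
  have hcan2 : ∀ X : Matrix (Fin n) (Fin n) ℂ, A * (A⁻¹ * X) = X := fun X => by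
    rw [← Matrix.mul_assoc, hAi, Matrix.one_mul]
  have hΦ₀inv : Φ₀⁻¹ = A⁻¹ * A⁻¹ := by rw [← hAA, Matrix.mul_inv_rev]
  set T := ((1:ℂ)/2) • (A + A⁻¹ * S) with hTdef
  have hTH : Tᴴ = ((1:ℂ)/2) • (A + S * A⁻¹) := by
    rw [hTdef]
    simp [conjTranspose_smul, conjTranspose_add, conjTranspose_mul, hSH,
      conjTranspose_nonsing_inv, hAH]
  have hAT : A * T = ((1:ℂ)/2) • (Φ₀ + S) := by
    rw [hTdef, Matrix.mul_smul, Matrix.mul_add, hAA, hcan2]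
  have hTA : Tᴴ * A = ((1:ℂ)/2) • (Φ₀ + S) := by
    rw [hTH, Matrix.smul_mul, Matrix.add_mul, hAA, Matrix.mul_assoc, hAi', Matrix.mul_one]
  have hPpsd : (((1:ℂ)/2) • (Φ₀ + S)).PosSemidef :=
    half_smul_psd (h0.posSemidef.add hSpsd)
  have hSS2 : ∀ X : Matrix (Fin n) (Fin n) ℂ, S * (S * X) = A * (Φ₁ * (A * X)) := fun X => by
    rw [← Matrix.mul_assoc, hSS]; simp only [Matrix.mul_assoc]
  have hSS1 : S * S = A * (Φ₁ * A) := by rw [hSS, Matrix.mul_assoc]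
  -- trace of hS3.sqrt
  have hL3 : ((B * A) * (B * A)ᴴ).PosSemidef := posSemidef_self_mul_conjTranspose _
  have hR3 : ((B * A)ᴴ * (B * A)).PosSemidef := posSemidef_conjTranspose_mul_self _
  have e3L : (B * A) * (B * A)ᴴ = B * Φ₀ * B := by
    rw [conjTranspose_mul, hAH, hBH, ← hAA]; simp only [Matrix.mul_assoc]
  have e3R : (B * A)ᴴ * (B * A) = A * Φ₁ * A := by
    rw [conjTranspose_mul, hAH, hBH, ← hBB]; simp only [Matrix.mul_assoc]
  have hd3 : (B * A).det ≠ 0 := by rw [det_mul]; exact mul_ne_zero hdB hdA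
  have t3a : hL3.sqrt = hS3.sqrt :=
    hL3.posSemidef_sqrt.eq_sqrt_of_sq_eq hS3 (by rw [hL3.sq_sqrt, e3L])
  have t3b : hR3.sqrt = S :=
    (hR3.posSemidef_sqrt.eq_sqrt_of_sq_eq hS0 (by rw [hR3.sq_sqrt, e3R])).trans hSeq.symm
  have h3tr : hS3.sqrt.trace = S.trace := by
    rw [← t3a, ← t3b]; exact (trace_sqrt_comm hd3 hL3 hR3).symm
  -- trace of hS1.sqrt
  have hL1 : ((A * R) * (A * R)ᴴ).PosSemidef := posSemidef_self_mul_conjTranspose _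
  have hR1 : ((A * R)ᴴ * (A * R)).PosSemidef := posSemidef_conjTranspose_mul_self _
  have e1R : (A * R)ᴴ * (A * R) = R * Φ₀ * R := by
    rw [conjTranspose_mul, hAH, hRH, ← hAA]; simp only [Matrix.mul_assoc]
  have e1L : (A * R) * (A * R)ᴴ = A * M * A := by
    rw [conjTranspose_mul, hAH, hRH, ← hRR]; simp only [Matrix.mul_assoc]
  have hd1 : (A * R).det ≠ 0 := by rw [det_mul]; exact mul_ne_zero hdA hdR
  have hAMA : A * M * A = (((1:ℂ)/2) • (Φ₀ + S)) * (((1:ℂ)/2) • (Φ₀ + S)) := by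
    calc A * M * A = A * T * (Tᴴ * A) := by rw [hMdef]; simp only [Matrix.mul_assoc]
      _ = _ := by rw [hAT, hTA]
  have t1a : hL1.sqrt = ((1:ℂ)/2) • (Φ₀ + S) :=
    (hPpsd.eq_sqrt_of_sq_eq hL1 (by rw [pow_two, e1L, hAMA])).symm
  have t1b : hR1.sqrt = hS1.sqrt :=
    hR1.posSemidef_sqrt.eq_sqrt_of_sq_eq hS1 (by rw [hR1.sq_sqrt, e1R])
  have h1tr : hS1.sqrt.trace = ((1:ℂ)/2) * (Φ₀.trace + S.trace) := by
    rw [← t1b, trace_sqrt_comm hd1 hL1 hR1, t1a, trace_smul, trace_add, smul_eq_mul]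
  -- trace of hS2.sqrt
  have hXpsd : (((1:ℂ)/2) • (S + S * (Φ₀⁻¹ * S))).PosSemidef := by
    refine half_smul_psd (hSpsd.add ?_)
    have h := (h0.inv.posSemidef).mul_mul_conjTranspose_same S
    rwa [hSH, Matrix.mul_assoc] at h
  have hL2 : ((B * T) * (B * T)ᴴ).PosSemidef := posSemidef_self_mul_conjTranspose _
  have hR2 : ((B * T)ᴴ * (B * T)).PosSemidef := posSemidef_conjTranspose_mul_self _
  have e2L : (B * T) * (B * T)ᴴ = B * M * B := by
    rw [conjTranspose_mul, hBH, hMdef]; simp only [Matrix.mul_assoc]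
  have e2R : (B * T)ᴴ * (B * T) = Tᴴ * Φ₁ * T := by
    rw [conjTranspose_mul, hBH, ← hBB]; simp only [Matrix.mul_assoc]
  have hdT : T.det ≠ 0 := by
    intro h; apply hdM; rw [hMdef, det_mul, h, zero_mul]
  have hd2 : (B * T).det ≠ 0 := by rw [det_mul]; exact mul_ne_zero hdB hdT
  have hbig : (S + S * (Φ₀⁻¹ * S)) * (S + S * (Φ₀⁻¹ * S))
      = (A + S * A⁻¹) * (Φ₁ * (A + A⁻¹ * S)) := by
    simp only [hΦ₀inv, Matrix.mul_add, Matrix.add_mul, Matrix.mul_assoc, hSS1, hSS2,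
      hcan1, hcan2]
  have hX2 : (((1:ℂ)/2) • (S + S * (Φ₀⁻¹ * S))) ^ 2 = (B * T)ᴴ * (B * T) := by
    rw [e2R, hTH, hTdef, pow_two]
    simp only [Matrix.smul_mul, Matrix.mul_smul, Matrix.mul_assoc]
    rw [hbig]
  have t2a : hL2.sqrt = hS2.sqrt :=
    hL2.posSemidef_sqrt.eq_sqrt_of_sq_eq hS2 (by rw [hL2.sq_sqrt, e2L])
  have t2b : ((1:ℂ)/2) • (S + S * (Φ₀⁻¹ * S)) = hR2.sqrt := hXpsd.eq_sqrt_of_sq_eq hR2 hX2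
  have htrSΦS : (S * (Φ₀⁻¹ * S)).trace = Φ₁.trace := by
    rw [Matrix.trace_mul_comm, Matrix.mul_assoc, hSS, hΦ₀inv]
    simp only [Matrix.mul_assoc, hcan1]
    rw [Matrix.trace_mul_comm, Matrix.mul_assoc, hAi, Matrix.mul_one]
  have h2tr : hS2.sqrt.trace = ((1:ℂ)/2) * (S.trace + Φ₁.trace) := by
    rw [← t2a, ← trace_sqrt_comm hd2 hL2 hR2, ← t2b, trace_smul, smul_eq_mul, trace_add, htrSΦS]
  -- trace of M
  have e4 : A⁻¹ * S * (S * A⁻¹) = Φ₁ := by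
    simp only [Matrix.mul_assoc, hSS2, hcan1, hAi, Matrix.mul_one]
  have eM : (A + A⁻¹ * S) * (A + S * A⁻¹)
      = (Φ₀ + A * (S * A⁻¹)) + (A⁻¹ * S * A + Φ₁) := by
    rw [Matrix.add_mul, Matrix.mul_add, Matrix.mul_add, hAA, e4]
  have eMa : (A * (S * A⁻¹)).trace = S.trace := by
    rw [Matrix.trace_mul_comm, Matrix.mul_assoc, hAi', Matrix.mul_one]
  have eMb : (A⁻¹ * S * A).trace = S.trace := by
    rw [Matrix.trace_mul_comm, hcan2]
  have hMtr : M.trace = ((1:ℂ)/2) * (((1:ℂ)/2) *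
      ((Φ₀.trace + S.trace) + (S.trace + Φ₁.trace))) := by
    rw [hMdef, hTH, hTdef, Matrix.smul_mul, Matrix.mul_smul, trace_smul, trace_smul,
      smul_eq_mul, smul_eq_mul, eM, trace_add, trace_add, trace_add, eMa, eMb]
  -- real parts
  have H1 : 2 * hS1.sqrt.trace.re = Φ₀.trace.re + S.trace.re := by
    have h := congrArg Complex.re h1tr
    simp only [Complex.mul_re, Complex.add_re, Complex.add_im] at h ⊢
    norm_num at h
    linarith [h]
  have H2 : 2 * hS2.sqrt.trace.re = S.trace.re + Φ₁.trace.re := by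
    have h := congrArg Complex.re h2tr
    simp only [Complex.mul_re, Complex.add_re, Complex.add_im] at h ⊢
    norm_num at h
    linarith [h]
  have H3 : hS3.sqrt.trace.re = S.trace.re := congrArg Complex.re h3tr
  have HM : 4 * M.trace.re = Φ₀.trace.re + Φ₁.trace.re + 2 * S.trace.re := by
    have h := congrArg Complex.re hMtr
    simp only [Complex.mul_re, Complex.add_re, Complex.add_im] at h
    norm_num at h
    linarith [h]
  have key4 : ∀ x : ℝ, Real.sqrt (x/4) = Real.sqrt x / 2 := by
    intro x
    rw [show x/4 = (1/4)*x by ring, Real.sqrt_mul (by norm_num : (0:ℝ) ≤ 1/4),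
      show Real.sqrt (1/4) = 1/2 from by
        rw [show (1/4:ℝ) = (1/2)^2 by norm_num, Real.sqrt_sq (by norm_num : (0:ℝ) ≤ 1/2)]]
    ring
  have g1 : Φ₀.trace.re + M.trace.re - 2 * hS1.sqrt.trace.re
      = (Φ₀.trace.re + Φ₁.trace.re - 2 * hS3.sqrt.trace.re)/4 := by
    rw [H3]; linarith
  have g2 : M.trace.re + Φ₁.trace.re - 2 * hS2.sqrt.trace.re
      = (Φ₀.trace.re + Φ₁.trace.re - 2 * hS3.sqrt.trace.re)/4 := by
    rw [H3]; linarith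
  exact ⟨by rw [g1, key4], by rw [g2, key4]⟩

set_option maxHeartbeats 1000000 in
theorem hellinger_geodesic_midpoint (n : ℕ)
    (Φ₀ Φ₁ : Matrix (Fin n) (Fin n) ℂ)
    (h0 : Φ₀.PosDef) (h1 : Φ₁.PosDef)
    (hS0 : (h0.posSemidef.sqrt * Φ₁ * h0.posSemidef.sqrt).PosSemidef)
    (U : Matrix (Fin n) (Fin n) ℂ)
    (hU : U = h1.posSemidef.sqrt⁻¹ * h0.posSemidef.sqrt⁻¹ * hS0.sqrt)
    (M : Matrix (Fin n) (Fin n) ℂ)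
    (hMdef : M = (((1 : ℂ) / 2) • (h0.posSemidef.sqrt + h1.posSemidef.sqrt * U)) *
        (((1 : ℂ) / 2) • (h0.posSemidef.sqrt + h1.posSemidef.sqrt * U))ᴴ)
    (hM : M.PosDef)
    (hS1 : (hM.posSemidef.sqrt * Φ₀ * hM.posSemidef.sqrt).PosSemidef)
    (hS2 : (h1.posSemidef.sqrt * M * h1.posSemidef.sqrt).PosSemidef)
    (hS3 : (h1.posSemidef.sqrt * Φ₀ * h1.posSemidef.sqrt).PosSemidef) :
    Real.sqrt (Φ₀.trace.re + M.trace.re - 2 * hS1.sqrt.trace.re) =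
        Real.sqrt (Φ₀.trace.re + Φ₁.trace.re - 2 * hS3.sqrt.trace.re) / 2 ∧
      Real.sqrt (M.trace.re + Φ₁.trace.re - 2 * hS2.sqrt.trace.re) =
        Real.sqrt (Φ₀.trace.re + Φ₁.trace.re - 2 * hS3.sqrt.trace.re) / 2 := by
  have hBB : h1.posSemidef.sqrt * h1.posSemidef.sqrt = Φ₁ := h1.posSemidef.sqrt_mul_self
  have hdB : (h1.posSemidef.sqrt).det ≠ 0 := by
    intro h; apply h1.det_pos.ne'; rw [← hBB, det_mul, h, mul_zero]
  have hBi : h1.posSemidef.sqrt * h1.posSemidef.sqrt⁻¹ = 1 :=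
    mul_nonsing_inv _ (isUnit_iff_ne_zero.mpr hdB)
  have hBU : h1.posSemidef.sqrt * U = (h0.posSemidef.sqrt)⁻¹ * hS0.sqrt := by
    rw [hU]; simp only [← Matrix.mul_assoc]; rw [hBi, Matrix.one_mul]
  rw [hBU] at hMdef
  exact hellinger_aux n Φ₀ Φ₁ M _ _ _ _ h0 h1 hM
    h0.posSemidef.posSemidef_sqrt.1 h1.posSemidef.posSemidef_sqrt.1
    hS0.posSemidef_sqrt.1 hM.posSemidef.posSemidef_sqrt.1
    h0.posSemidef.sqrt_mul_self hBB hM.posSemidef.sqrt_mul_self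
    hS0 rfl hMdef hS1 hS2 hS3
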